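/- Let n ≥ 4 and let w̃ = b(ab)^{(n-2)/2} if n is even and w̃ = (ba)^{(n-1)/2} if n is odd. Let w₁,…,w_m be all words of length n-1 over {a,b}, and let w'_i be obtained from w_i by removing a prefix b² if present and a suffix a² (if n even) respectively a suffix b² (if n odd) if present. Define w̄ = w̃ba(b²w'₁a²)(b²w'₂a²)⋯(b²w'_ma²)b²a if n is even, and w̄ = w̃(b²w'₁b²)a(b²w'₂b²)⋯a(b²w'_mb²)a if n is odd. Then w̄ contains every word of length n-1 over {a,b} as a factor, and neither u = w̄aw̄ nor v = w̄bw̄ contains aⁿ or bⁿ as a factor, while w = aw̃ (of length n) is a factor of u but not of v. -/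

import Mathlib

open List


/-- `k`-fold concatenation of a word. -/
def repW (x : List Bool) (k : ℕ) : List Bool := (List.replicate k x).flatten

/-- Remove the prefix `s` from `x` if possible. -/
def stripPre (s x : List Bool) : List Bool :=
  if s <+: x then x.drop s.length else x

/-- Remove the suffix `s` from `x` if possible. -/
def stripSuf (s x : List Bool) : List Bool :=
  if s <:+ x then x.take (x.length - s.length) else x

/-- The word `w̃`: `b(ab)^{(n-2)/2}` if `n` is even, `(ba)^{(n-1)/2}` if `n` is odd
(with `a = true`, `b = false`). -/
def wtilde (n : ℕ) : List Bool :=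
  if n % 2 = 0 then [false] ++ repW [true, false] ((n - 2) / 2)
  else repW [false, true] ((n - 1) / 2)

/-- `w'` obtained from a word by removing a prefix `b²` if possible and a suffix
`a²` (if `n` even) resp. `b²` (if `n` odd) if possible. -/
def wprime (n : ℕ) (x : List Bool) : List Bool :=
  if n % 2 = 0 then stripSuf [true, true] (stripPre [false, false] x)
  else stripSuf [false, false] (stripPre [false, false] x)

/-- The word `w̄` built from `w̃` and a complete list `L` of the words of
length `n - 1`. -/
def wbar (n : ℕ) (L : List (List Bool)) : List Bool :=
  if n % 2 = 0 then
    wtilde n ++ [false, true] ++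
      (L.map fun x => [false, false] ++ wprime n x ++ [true, true]).flatten ++
      [false, false, true]
  else
    wtilde n ++ (L.map fun x => [false, false] ++ wprime n x ++ [false, false, true]).flatten


-- § generic helpers
theorem sufsuf {α} {l₁ l₂ l₃ : List α} (h1 : l₁ <:+ l₃) (h2 : l₂ <:+ l₃)
    (h : l₁.length ≤ l₂.length) : l₁ <:+ l₂ := by
  rw [← reverse_prefix] at *
  exact prefix_of_prefix_length_le h1 h2 (by simpa)

theorem sufeq {α} {l₁ l₂ l₃ : List α} (h1 : l₁ <:+ l₃) (h2 : l₂ <:+ l₃)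
    (h : l₁.length = l₂.length) : l₁ = l₂ :=
  (sufsuf h1 h2 h.le).eq_of_length h

theorem preeq {α} {l₁ l₂ l₃ : List α} (h1 : l₁ <+: l₃) (h2 : l₂ <+: l₃)
    (h : l₁.length = l₂.length) : l₁ = l₂ :=
  (prefix_of_prefix_length_le h1 h2 h.le).eq_of_length h

theorem infix_append_split {α} {w s t : List α} (h : w <:+: s ++ t) :
    w <:+: s ∨ w <:+: t ∨
      ∃ j, 0 < j ∧ j < w.length ∧ w.take j <:+ s ∧ w.drop j <+: t := by
  obtain ⟨u, v, huv⟩ := h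
  rcases le_or_gt (u.length + w.length) s.length with h1 | h1
  · left
    have hw : w <+: (s ++ t).drop u.length := by
      rw [← huv]; simp [drop_append]
    rw [drop_append, show u.length - s.length = 0 by omega, drop_zero] at hw
    have := (isPrefix_append_of_length (by simp; omega)).mp hw
    exact this.isInfix.trans (drop_suffix _ _).isInfix
  · rcases le_or_gt s.length u.length with h2 | h2
    · right; left
      have : t = u.drop s.length ++ w ++ v := by
        have := congrArg (List.drop s.length) huv
        simpa [drop_append, show s.length - u.length = 0 by omega,
          show s.length - (u.length + w.length) = 0 by omega] using this.symm
      exact ⟨_, _, this.symm⟩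
    · right; right
      refine ⟨s.length - u.length, by omega, by omega, ?_, ?_⟩
      · have : s = u ++ w.take (s.length - u.length) := by
          have h3 : (u ++ w ++ v).take s.length = u ++ w.take (s.length - u.length) := by
            rw [append_assoc, take_append, take_of_length_le (by omega),
              take_append]
            simp [show s.length - u.length - w.length = 0 by omega]
          rw [huv] at h3; simpa using h3
        exact ⟨u, this.symm⟩
      · have : t = w.drop (s.length - u.length) ++ v := by
          have := congrArg (List.drop s.length) huv
          simpa [drop_append, show s.length - u.length - w.length = 0 by omega,
            drop_eq_nil_of_le (le_of_lt h2),
            show s.length - (u.length + w.length) = 0 by omega] using this.symm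
        exact ⟨v, this.symm⟩

theorem cancel_pre {α} {a b c : List α} (h : a ++ b <+: a ++ c) : b <+: c := by
  obtain ⟨u, e⟩ := h
  rw [append_assoc] at e
  exact ⟨u, append_cancel_left e⟩

theorem cancel_suf {α} {x : α} {l z : List α} (h : l ++ [x] <:+ z ++ [x]) : l <:+ z := by
  rw [← reverse_prefix] at h ⊢
  simpa [cons_prefix_cons] using h

theorem infix_rep {l : List Bool} {m : ℕ} {c : Bool} (h : l <:+: replicate m c) :
    l = replicate l.length c :=
  eq_replicate_of_mem (fun b hb => eq_of_mem_replicate (h.sublist.subset hb))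

theorem rep_suf {c : Bool} {k j : ℕ} (h : k ≤ j) : replicate k c <:+ replicate j c := by
  refine ⟨replicate (j - k) c, ?_⟩
  rw [← replicate_add]; congr 1; omega

theorem rep_pre {c : Bool} {k j : ℕ} (h : k ≤ j) : replicate k c <+: replicate j c := by
  refine ⟨replicate (j - k) c, ?_⟩
  rw [← replicate_add]; congr 1; omega

-- first-character clash helpers
theorem head_clash {c d : Bool} {l₁ l₂ A : List Bool} (h1 : (c :: l₁) <+: A)
    (h2 : (d :: l₂) <+: A) (h : c ≠ d) : False := by
  have p1 : [c] <+: A := IsPrefix.trans ⟨l₁, rfl⟩ h1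
  have p2 : [d] <+: A := IsPrefix.trans ⟨l₂, rfl⟩ h2
  exact h (by simpa using preeq p1 p2 rfl)

theorem last_clash {c d : Bool} {l₁ l₂ A : List Bool} (h1 : (l₁ ++ [c]) <:+ A)
    (h2 : (l₂ ++ [d]) <:+ A) (h : c ≠ d) : False := by
  have e := sufeq ((suffix_append l₁ [c]).trans h1) ((suffix_append l₂ [d]).trans h2) rfl
  exact h (by simpa using e)

-- § alternating words
def altW (c : Bool) : ℕ → List Bool
  | 0 => []
  | m+1 => c :: altW (!c) m

def cc (c : Bool) (j : ℕ) : Bool := if j % 2 = 0 then c else !c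

theorem cc_zero (c : Bool) : cc c 0 = c := rfl

theorem cc_succ (c : Bool) (j : ℕ) : cc c (j+1) = cc (!c) j := by
  unfold cc
  rcases Nat.mod_two_eq_zero_or_one j with h | h
  · rw [if_neg (by omega : ¬ (j+1) % 2 = 0), if_pos h]
  · rw [if_pos (by omega : (j+1) % 2 = 0), if_neg (by omega)]
    simp

theorem cc_even {c : Bool} {j : ℕ} (h : j % 2 = 0) : cc c j = c := by simp [cc, h]
theorem cc_odd {c : Bool} {j : ℕ} (h : j % 2 = 1) : cc c j = !c := by simp [cc, h]

@[simp] theorem altW_length (c : Bool) (m : ℕ) : (altW c m).length = m := by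
  induction m generalizing c with
  | zero => rfl
  | succ m ih => simp [altW, ih]

theorem altW_succ (c : Bool) (m : ℕ) : altW c (m+1) = c :: altW (!c) m := rfl

theorem altW_drop (c : Bool) (m j : ℕ) : (altW c m).drop j = altW (cc c j) (m - j) := by
  induction j generalizing c m with
  | zero => simp [cc_zero]
  | succ j ih =>
    cases m with
    | zero => simp [altW]
    | succ m =>
      rw [altW_succ, drop_succ_cons, ih, cc_succ]
      congr 1
      omega

theorem altW_take (c : Bool) (m j : ℕ) : (altW c m).take j = altW c (min j m) := by
  induction j generalizing c m with
  | zero => simp [altW]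
  | succ j ih =>
    cases m with
    | zero => simp [altW]
    | succ m =>
      rw [altW_succ, take_succ_cons, ih, Nat.succ_min_succ, altW_succ]

theorem altW_snoc (c : Bool) (m : ℕ) : altW c (m+1) = altW c m ++ [cc c m] := by
  induction m generalizing c with
  | zero => rfl
  | succ m ih => rw [altW_succ, ih, cc_succ, altW_succ]; rfl

-- the length-k suffix of altW c m
theorem altW_sufN {c : Bool} {m k : ℕ} (h : k ≤ m) : altW (cc c (m - k)) k <:+ altW c m := by
  have := altW_drop c m (m - k)
  rw [show m - (m - k) = k by omega] at this
  exact this ▸ drop_suffix _ _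

theorem altW_head_eq {c d : Bool} {j : ℕ} (hj : 0 < j) (h : altW c j = altW d j) : c = d := by
  cases j with
  | zero => omega
  | succ j => rw [altW_succ, altW_succ] at h; exact (List.cons.injEq _ _ _ _).mp h |>.1

theorem altW_two (c : Bool) : altW c 2 = [c, !c] := by simp [altW]
theorem altW_three (c : Bool) : altW c 3 = [c, !c, c] := by simp [altW]

-- a suffix altW d j of altW c m forces d = cc c (m - j)
theorem altW_suf_char {c d : Bool} {m j : ℕ} (hj : 0 < j) (h : altW d j <:+ altW c m) :
    d = cc c (m - j) := by
  have hjm : j ≤ m := by simpa using h.length_le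
  have := sufeq h (altW_sufN (c := c) hjm) (by simp)
  exact altW_head_eq hj this

-- length-k suffix comparison: if z has suffix s with |s| = k and altW d j <:+ z with k ≤ j,
-- then s = altW (cc d (j-k)) k
theorem altW_suf_suf {d : Bool} {z s : List Bool} {j k : ℕ} (hk : k ≤ j) (hs : s <:+ z)
    (hsl : s.length = k) (h : altW d j <:+ z) : s = altW (cc d (j - k)) k := by
  have h2 : altW (cc d (j - k)) k <:+ z := (altW_sufN hk).trans h
  exact sufeq hs h2 (by simp [hsl])

-- § chain machinery
def restOK (R : List Bool) : Prop := R = [] ∨ [false, false] <+: R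

def SpanOK (w c : List Bool) : Prop :=
  ∀ j R, 0 < j → j < w.length → w.take j <:+ c → restOK R → ¬ w.drop j <+: R

def startFF (c : List Bool) : Prop := [false, false] <+: c

theorem restOK_flatten {cs : List (List Bool)} {R : List Bool}
    (h : ∀ c ∈ cs, startFF c) (hR : restOK R) : restOK (cs.flatten ++ R) := by
  cases cs with
  | nil => simpa using hR
  | cons c cs =>
    right
    rw [flatten_cons, append_assoc]
    exact (h c (mem_cons_self)).trans (prefix_append _ _)

theorem build_chain (w : List Bool) (hw : w ≠ []) :
    ∀ (cs : List (List Bool)) (R : List Bool),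
      (∀ c ∈ cs, ¬ w <:+: c ∧ SpanOK w c) → (∀ c ∈ cs.tail, startFF c) →
      restOK R → ¬ w <:+: R → ¬ w <:+: cs.flatten ++ R := by
  intro cs
  induction cs with
  | nil => intro R _ _ _ hR; simpa using hR
  | cons c cs ih =>
    intro R hGood hFF hR0 hR h
    rw [flatten_cons, append_assoc] at h
    rcases infix_append_split h with h1 | h1 | ⟨j, hj1, hj2, hj3, hj4⟩
    · exact (hGood c (mem_cons_self)).1 h1
    · exact ih R (fun x hx => hGood x (mem_cons_of_mem c hx))
        (fun x hx => hFF x (tail_subset cs hx)) hR0 hR h1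
    · exact (hGood c (mem_cons_self)).2 j _ hj1 hj2 hj3
        (restOK_flatten (fun x hx => hFF x hx) hR0) hj4

-- § span lemmas
theorem spanOK_rept {n : ℕ} (hn : 4 ≤ n) (c : List Bool) : SpanOK (replicate n true) c := by
  intro j R hj hjn _ hR hdrop
  rw [length_replicate] at hjn
  rw [drop_replicate] at hdrop
  rcases hR with rfl | hp
  · rw [prefix_nil] at hdrop
    have := congrArg List.length hdrop
    simp at this; omega
  · have : replicate (n - j) true = true :: replicate (n - j - 1) true := by
      rw [← replicate_succ]; congr 1; omega
    rw [this] at hdrop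
    exact head_clash hdrop hp (by simp)

theorem spanOK_repf {n : ℕ} (hn : 4 ≤ n) {c : List Bool} (hend : [true] <:+ c) :
    SpanOK (replicate n false) c := by
  intro j R hj hjn htake hR hdrop
  rw [length_replicate] at hjn
  rw [take_replicate] at htake
  have hmin : min j n = j := by omega
  rw [hmin] at htake
  have : replicate j false = replicate (j - 1) false ++ [false] := by
    rw [← replicate_succ']; congr 1; omega
  rw [this] at htake
  exact last_clash htake (show [] ++ [true] <:+ c by simpa using hend) (by simp)

theorem altWf_not_pre_restOK {m : ℕ} (hm : 2 ≤ m) {R : List Bool} (hR : restOK R) :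
    ¬ altW false m <+: R := by
  intro h
  have he : altW false m = [false, true] ++ altW false (m - 2) := by
    rw [show m = (m-2)+1+1 by omega, altW_succ, altW_succ]; simp
  rw [he] at h
  have h2 : [false, true] <+: R := IsPrefix.trans ⟨altW false (m-2), rfl⟩ h
  rcases hR with rfl | hp
  · rw [prefix_nil] at h2; simp at h2
  · have := preeq h2 hp (by simp)
    simp at this

theorem spanOK_alt {n : ℕ} (hn : 4 ≤ n) {c : List Bool}
    (hc : [true, true] <:+ c ∨ [false, false, true] <:+ c ∨
      (n % 2 = 1 ∧ c = altW false (n - 1))) :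
    SpanOK (altW true n) c := by
  intro j R hj hjn htake hR hdrop
  rw [altW_length] at hjn
  rw [altW_take, min_eq_left hjn.le] at htake
  rw [altW_drop] at hdrop
  rcases hc with hc | hc | ⟨hpar, rfl⟩
  · -- chunk ends [t,t] : force j = 1
    have hj1 : j = 1 := by
      by_contra hne
      have h2j : 2 ≤ j := by omega
      have := altW_suf_suf h2j hc rfl htake
      rw [altW_two] at this
      rcases (cc true (j-2)) with _ | _ <;> simp_all
    subst hj1
    rw [show cc true 1 = false by rfl] at hdrop
    exact altWf_not_pre_restOK (by omega) hR hdrop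
  · -- chunk ends [f,f,t] : force j = 1
    have hj1 : j = 1 := by
      by_contra hne
      rcases Nat.lt_or_ge j 3 with h3 | h3
      · have hj2 : j = 2 := by omega
        subst hj2
        have hft : [false, true] <:+ c := IsSuffix.trans ⟨[false], rfl⟩ hc
        have := sufeq htake hft (by simp)
        rw [altW_two] at this
        simp at this
      · have := altW_suf_suf h3 hc rfl htake
        rw [altW_three] at this
        rcases (cc true (j-3)) with _ | _ <;> simp_all
    subst hj1
    rw [show cc true 1 = false by rfl] at hdrop
    exact altWf_not_pre_restOK (by omega) hR hdrop
  · -- chunk = altW false (n-1), n odd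
    have hchar := altW_suf_char hj htake
    have hjle : j ≤ n - 1 := by simpa using htake.length_le
    have hjodd : j % 2 = 1 := by
      rcases Nat.mod_two_eq_zero_or_one (n - 1 - j) with h | h
      · rw [cc_even h] at hchar; simp at hchar
      · omega
    rw [cc_odd hjodd] at hdrop
    have : 2 ≤ n - j := by omega
    exact altWf_not_pre_restOK this hR (by simpa using hdrop)

-- § strip lemmas
theorem stripPre_cases (s x : List Bool) :
    (s <+: x ∧ x = s ++ stripPre s x) ∨ (¬ s <+: x ∧ stripPre s x = x) := by
  unfold stripPre
  by_cases h : s <+: x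
  · left
    refine ⟨h, ?_⟩
    rw [if_pos h]
    obtain ⟨u, hu⟩ := h
    rw [← hu]; simp
  · right; rw [if_neg h]; exact ⟨h, rfl⟩

theorem stripSuf_cases (s y : List Bool) :
    (s <:+ y ∧ y = stripSuf s y ++ s) ∨ (¬ s <:+ y ∧ stripSuf s y = y) := by
  unfold stripSuf
  by_cases h : s <:+ y
  · left
    refine ⟨h, ?_⟩
    rw [if_pos h]
    obtain ⟨u, hu⟩ := h
    rw [← hu]; simp
  · right; rw [if_neg h]; exact ⟨h, rfl⟩

theorem stripPre_suffix (s x : List Bool) : stripPre s x <:+ x := by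
  unfold stripPre; split
  · exact drop_suffix _ _
  · exact suffix_rfl

theorem stripSuf_prefix (s y : List Bool) : stripSuf s y <+: y := by
  unfold stripSuf; split
  · exact take_prefix _ _
  · exact prefix_rfl

theorem stripPre_len (s x : List Bool) : (stripPre s x).length ≤ x.length :=
  (stripPre_suffix s x).length_le

theorem stripSuf_len (s y : List Bool) : (stripSuf s y).length ≤ y.length :=
  (stripSuf_prefix s y).length_le

theorem wprime_len (n : ℕ) (x : List Bool) : (wprime n x).length ≤ x.length := by
  unfold wprime; split <;> exact (stripSuf_len _ _).trans (stripPre_len _ _)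

-- § replicate helpers
theorem rep_head {c : Bool} {j : ℕ} (h : 0 < j) :
    List.replicate j c = c :: List.replicate (j-1) c := by
  rw [← List.replicate_succ]; congr 1; omega

theorem rep_last {c : Bool} {j : ℕ} (h : 0 < j) :
    List.replicate j c = List.replicate (j-1) c ++ [c] := by
  rw [← List.replicate_succ']; congr 1; omega

theorem cc_suf_rep {c : Bool} {j : ℕ} (h : 2 ≤ j) : [c, c] <:+ List.replicate j c := by
  have : [c, c] = List.replicate 2 c := rfl
  rw [this]; exact rep_suf h

theorem cc_pre_rep {c : Bool} {j : ℕ} (h : 2 ≤ j) : [c, c] <+: List.replicate j c := by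
  have : [c, c] = List.replicate 2 c := rfl
  rw [this]; exact rep_pre h

theorem headpre_clash {c d : Bool} {m : ℕ} {l : List Bool}
    (h : List.replicate m c <+: d :: l) (hm : 0 < m) (hne : c ≠ d) : False := by
  rw [rep_head hm] at h
  exact head_clash h prefix_rfl hne

theorem lastsuf_clash {c d : Bool} {m : ℕ} {z : List Bool}
    (h : List.replicate m c <:+ z ++ [d]) (hm : 0 < m) (hne : c ≠ d) : False := by
  rw [rep_last hm] at h
  exact last_clash h suffix_rfl hne

theorem near_full {α} {w l : List α} (h : w <:+: l) (hl : l.length ≤ w.length + 1) :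
    w <+: l ∨ w <:+ l := by
  obtain ⟨u, v, huv⟩ := h
  have hlen := congrArg List.length huv
  simp at hlen
  rcases Nat.eq_zero_or_pos u.length with hu | hu
  · left
    rw [List.length_eq_zero_iff] at hu
    subst hu
    exact ⟨v, by simpa using huv⟩
  · right
    have hv : v = [] := by
      rw [← List.length_eq_zero_iff]; omega
    subst hv
    exact ⟨u, by simpa using huv⟩

theorem cancel_suf' {α} {s l z : List α} (h : l ++ s <:+ z ++ s) : l <:+ z := by
  rw [← List.reverse_prefix] at h ⊢
  simp only [List.reverse_append] at h
  exact cancel_pre h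

-- § block lemmas (even)
section blocks
variable {n : ℕ} {x : List Bool}

theorem blkE_not_rept (hn : 4 ≤ n) (hpar : n % 2 = 0) (hx : x.length = n - 1) :
    ¬ replicate n true <:+: ([false, false] ++ (wprime n x ++ [true, true])) := by
  intro h
  set w' := wprime n x with hw'
  have hw'len : w'.length ≤ n - 1 := hx ▸ wprime_len n x
  have key : (¬ [true, true] <:+ w') ∨ w'.length ≤ n - 3 := by
    have he : w' = stripSuf [true, true] (stripPre [false, false] x) := by
      rw [hw', wprime, if_pos hpar]
    set y := stripPre [false, false] x with hy
    have hylen : y.length ≤ n - 1 := hx ▸ stripPre_len _ _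
    rcases stripSuf_cases [true, true] y with ⟨hs, heq⟩ | ⟨hs, heq⟩
    · right
      have := congrArg List.length heq
      simp [← he] at this
      omega
    · left; rw [he, heq]; exact hs
  rcases infix_append_split h with h1 | h1 | ⟨j, hj1, hj2, hj3, hj4⟩
  · have := h1.length_le; simp at this; omega
  · rcases key with hk | hk
    · rcases infix_append_split h1 with h2 | h2 | ⟨j, hj1, hj2, hj3, hj4⟩
      · have := h2.length_le; simp at this; omega
      · have := h2.length_le; simp at this; omega
      · rw [length_replicate] at hj2
        have hn2 : n - j ≤ 2 := by simpa using hj4.length_le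
        rw [take_replicate, min_eq_left hj2.le] at hj3
        exact hk ((cc_suf_rep (by omega)).trans hj3)
    · have := h1.length_le; simp at this; omega
  · rw [length_replicate] at hj2
    rw [take_replicate, min_eq_left hj2.le] at hj3
    exact lastsuf_clash (z := [false]) (by simpa using hj3) hj1 (by simp)

theorem blkE_not_repf (hn : 4 ≤ n) (hpar : n % 2 = 0) (hx : x.length = n - 1) :
    ¬ replicate n false <:+: ([false, false] ++ (wprime n x ++ [true, true])) := by
  intro h
  set w' := wprime n x with hw'
  have hw'len : w'.length ≤ n - 1 := hx ▸ wprime_len n x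
  have key : (¬ [false, false] <+: w') ∨ w'.length ≤ n - 3 := by
    have he : w' = stripSuf [true, true] (stripPre [false, false] x) := by
      rw [hw', wprime, if_pos hpar]
    set y := stripPre [false, false] x with hy
    rcases stripPre_cases [false, false] x with ⟨hs, heq⟩ | ⟨hs, heq⟩
    · right
      have hyl : y.length = n - 3 := by
        have := congrArg List.length heq
        simp [← hy] at this
        omega
      rw [he]
      have := stripSuf_len [true, true] y
      omega
    · left
      intro hff
      apply hs
      have h1 : w' <+: y := he ▸ stripSuf_prefix [true, true] y
      have hyx : y = x := hy.trans heq
      exact hff.trans (hyx ▸ h1)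
  rw [← append_assoc] at h
  rcases infix_append_split h with h1 | h1 | ⟨j, hj1, hj2, hj3, hj4⟩
  · rcases key with hk | hk
    · rcases infix_append_split h1 with h2 | h2 | ⟨j, hj1, hj2, hj3, hj4⟩
      · have := h2.length_le; simp at this; omega
      · have := h2.length_le; simp at this; omega
      · rw [length_replicate] at hj2
        rw [take_replicate, min_eq_left hj2.le] at hj3
        have hj5 : j ≤ 2 := by simpa using hj3.length_le
        rw [drop_replicate] at hj4
        exact hk ((cc_pre_rep (by omega)).trans hj4)
    · have := h1.length_le; simp at this; omega
  · have := h1.length_le; simp at this; omega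
  · rw [length_replicate] at hj2
    rw [drop_replicate] at hj4
    exact headpre_clash hj4 (by omega) (by simp)

end blocks

-- § block lemmas (odd)
section blocksO
variable {n : ℕ} {x : List Bool}

theorem blkO_not_rept (hn : 4 ≤ n) (hx : x.length = n - 1) :
    ¬ replicate n true <:+: ([false, false] ++ (wprime n x ++ [false, false, true])) := by
  intro h
  set w' := wprime n x with hw'
  have hw'len : w'.length ≤ n - 1 := hx ▸ wprime_len n x
  rcases infix_append_split h with h1 | h1 | ⟨j, hj1, hj2, hj3, hj4⟩
  · have := h1.length_le; simp at this; omega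
  · rw [show ([false, false, true] : List Bool) = [false, false] ++ [true] from rfl,
      ← append_assoc] at h1
    rcases infix_append_split h1 with h2 | h2 | ⟨j, hj1, hj2, hj3, hj4⟩
    · rcases infix_append_split h2 with h3 | h3 | ⟨j, hj1, hj2, hj3, hj4⟩
      · have := h3.length_le; simp at this; omega
      · have := h3.length_le; simp at this; omega
      · rw [length_replicate] at hj2
        rw [drop_replicate] at hj4
        exact headpre_clash hj4 (by omega) (by simp)
    · have := h2.length_le; simp at this; omega
    · rw [length_replicate] at hj2
      have hnj : n - j ≤ 1 := by simpa using hj4.length_le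
      rw [take_replicate, min_eq_left hj2.le] at hj3
      have h5 : [true, true] <:+ w' ++ [false, false] := (cc_suf_rep (by omega)).trans hj3
      have h6 : [false, false] <:+ w' ++ [false, false] := suffix_append _ _
      have := sufeq h5 h6 rfl
      simp at this
  · rw [length_replicate] at hj2
    rw [take_replicate, min_eq_left hj2.le] at hj3
    exact lastsuf_clash (z := [false]) (by simpa using hj3) hj1 (by simp)

theorem H4 {j : ℕ} {z w' : List Bool} (hj : 2 ≤ j) (h : replicate j false <:+ z ++ w')
    (hsuf : ¬ [false, false] <:+ w') (hlen : 2 ≤ w'.length) : False := by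
  rcases le_or_gt j w'.length with hle | hlt
  · have : replicate j false <:+ w' := sufsuf h (suffix_append _ _) (by simpa using hle)
    exact hsuf ((cc_suf_rep hj).trans this)
  · have hw : w' <:+ replicate j false := sufsuf (suffix_append _ _) h (by simpa using hlt.le)
    have := infix_rep hw.isInfix
    apply hsuf
    rw [this]
    exact cc_suf_rep (by omega)

theorem H5 {m : ℕ} (h : replicate m false <+: [false, false, true]) : m ≤ 2 := by
  by_contra hm
  have h3 : [false, false, false] <+: [false, false, true] :=
    (show [false, false, false] = replicate 3 false from rfl) ▸ ((rep_pre (by omega)).trans h)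
  have := preeq h3 prefix_rfl rfl
  simp at this

theorem blkO_not_repf (hn : 4 ≤ n) (hpar : n % 2 = 1) (hx : x.length = n - 1) :
    ¬ replicate n false <:+: ([false, false] ++ (wprime n x ++ [false, false, true])) := by
  intro h
  set w' := wprime n x with hw'
  have he : w' = stripSuf [false, false] (stripPre [false, false] x) := by
    rw [hw', wprime, if_neg (by omega)]
  set y := stripPre [false, false] x with hy
  have hn5 : 5 ≤ n := by omega
  rcases stripPre_cases [false, false] x with ⟨hsp, heqp⟩ | ⟨hsp, heqp⟩
  · -- prefix stripped : y.length = n - 3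
    have hyl : y.length = n - 3 := by
      have := congrArg List.length heqp; simp [← hy] at this; omega
    rcases stripSuf_cases [false, false] y with ⟨hss, heqs⟩ | ⟨hss, heqs⟩
    · -- case A : both strips, total length n
      have hwl : w'.length = n - 5 := by
        have := congrArg List.length heqs; simp [← he] at this; omega
      have hlen : ([false, false] ++ (w' ++ [false, false, true])).length = n := by
        simp; omega
      have heq := h.eq_of_length (by rw [hlen, length_replicate])
      have : true ∈ replicate n false := by rw [heq]; simp
      simpa using eq_of_mem_replicate this
    · -- case B : only prefix strip; w' = y, ¬ ff <:+ w'
      have hwy : w' = y := he.trans heqs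
      have hnsuf : ¬ [false, false] <:+ w' := hwy ▸ hss
      have hwl : w'.length = n - 3 := by rw [hwy]; exact hyl
      rw [← append_assoc] at h
      rcases infix_append_split h with h1 | h1 | ⟨j, hj1, hj2, hj3, hj4⟩
      · have := h1.length_le; simp at this; omega
      · have := h1.length_le; simp at this; omega
      · rw [length_replicate] at hj2
        rw [drop_replicate] at hj4
        have hnj := H5 hj4
        rw [take_replicate, min_eq_left hj2.le] at hj3
        exact H4 (by omega) hj3 hnsuf (by rw [hwl]; omega)
  · -- no prefix strip : y = x, ¬ ff <+: x
    have hyx : y = x := hy.trans heqp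
    rcases stripSuf_cases [false, false] y with ⟨hss, heqs⟩ | ⟨hss, heqs⟩
    · -- case C : only suffix strip
      have hylen : y.length = n - 1 := by rw [hyx, hx]
      have hwl : w'.length = n - 3 := by
        have := congrArg List.length heqs; simp [← he] at this; omega
      have hnpre : ¬ [false, false] <+: w' := by
        intro hp
        exact hsp (hp.trans ((he ▸ stripSuf_prefix [false, false] y).trans (hyx ▸ prefix_rfl)))
      -- block = ([f,f] ++ w' ++ [f,f]) ++ [t]
      rw [show ([false, false, true] : List Bool) = [false, false] ++ [true] from rfl] at h
      rw [show [false, false] ++ (w' ++ ([false, false] ++ [true]))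
          = ([false, false] ++ (w' ++ [false, false])) ++ [true] by simp] at h
      rcases infix_append_split h with h1 | h1 | ⟨j, hj1, hj2, hj3, hj4⟩
      · -- infix of ff ++ w' ++ ff, length n + 1
        rcases near_full h1 (by simp; omega) with h2 | h2
        · -- prefix
          have h3 : replicate (n-2) false <+: w' ++ [false, false] := by
            apply cancel_pre (a := [false, false])
            rw [show ([false,false] : List Bool) ++ replicate (n-2) false
              = replicate n false by
                rw [show ([false,false] : List Bool) = replicate 2 false from rfl,
                  ← replicate_add]
                congr 1; omega]
            exact h2
          have h4 : w' <+: replicate (n-2) false :=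
            prefix_of_prefix_length_le (prefix_append _ _) h3 (by simp; omega)
          have h5 := infix_rep h4.isInfix
          apply hnpre
          rw [h5]
          exact cc_pre_rep (by omega)
        · -- suffix
          have h3 : replicate (n-2) false <:+ [false, false] ++ w' := by
            apply cancel_suf' (s := [false, false])
            rw [show replicate (n-2) false ++ [false, false]
              = replicate n false by
                rw [show ([false,false] : List Bool) = replicate 2 false from rfl,
                  ← replicate_add]
                congr 1; omega]
            simpa [append_assoc] using h2
          have h4 : w' <:+ replicate (n-2) false :=
            sufsuf (suffix_append _ _) h3 (by simp; omega)
          have h5 := infix_rep h4.isInfix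
          apply hnpre
          rw [h5]
          exact cc_pre_rep (by omega)
      · have := h1.length_le; simp at this; omega
      · rw [length_replicate] at hj2
        rw [drop_replicate] at hj4
        exact headpre_clash hj4 (by omega) (by simp)
    · -- case D : no strips
      have hwy : w' = y := he.trans heqs
      have hnsuf : ¬ [false, false] <:+ w' := hwy ▸ hss
      have hnpre : ¬ [false, false] <+: w' := by rw [hwy, hyx]; exact hsp
      have hwl : w'.length = n - 1 := by rw [hwy, hyx]; exact hx
      rw [← append_assoc] at h
      rcases infix_append_split h with h1 | h1 | ⟨j, hj1, hj2, hj3, hj4⟩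
      · -- infix of ff ++ w', length n + 1
        rcases near_full h1 (by simp; omega) with h2 | h2
        · have h3 : replicate (n-2) false <+: w' := by
            apply cancel_pre (a := [false, false])
            rw [show ([false,false] : List Bool) ++ replicate (n-2) false
              = replicate n false by
                rw [show ([false,false] : List Bool) = replicate 2 false from rfl,
                  ← replicate_add]
                congr 1; omega]
            exact h2
          exact hnpre ((cc_pre_rep (by omega)).trans h3)
        · exact H4 (by omega) h2 hnsuf (by omega)
      · have := h1.length_le; simp at this; omega
      · rw [length_replicate] at hj2
        rw [drop_replicate] at hj4
        have hnj := H5 hj4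
        rw [take_replicate, min_eq_left hj2.le] at hj3
        exact H4 (by omega) hj3 hnsuf (by rw [hwl]; omega)

end blocksO

-- § wtilde = altW false (n-1)
theorem repW_pair (c : Bool) (k : ℕ) : repW [c, !c] k = altW c (2 * k) := by
  induction k with
  | zero => rfl
  | succ k ih =>
    rw [repW, replicate_succ, flatten_cons,
      show (replicate k [c, !c]).flatten = repW [c, !c] k from rfl, ih,
      show 2 * (k+1) = (2*k)+1+1 by omega, altW_succ, altW_succ]
    simp

theorem wtilde_eq {n : ℕ} (hn : 4 ≤ n) : wtilde n = altW false (n - 1) := by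
  unfold wtilde
  rcases Nat.mod_two_eq_zero_or_one n with h | h
  · rw [if_pos h]
    rw [show ([true, false] : List Bool) = [true, !true] by simp, repW_pair]
    rw [show 2 * ((n-2)/2) = n - 2 by omega]
    rw [show n - 1 = (n-2)+1 by omega, altW_succ]
    simp
  · rw [if_neg (by omega)]
    rw [show ([false, true] : List Bool) = [false, !false] by simp, repW_pair]
    congr 1; omega

-- § alt-word block lemmas
section altblocks
variable {n : ℕ} {x : List Bool}

theorem altW_suf_ff {j : ℕ} (hj : 0 < j) (h : altW true j <:+ [false, false]) : False := by
  have hj2 : j ≤ 2 := by simpa using h.length_le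
  interval_cases j
  · exact absurd h (by decide)
  · exact absurd h (by decide)

theorem blkE_not_alt (hn : 4 ≤ n) (hpar : n % 2 = 0) (hx : x.length = n - 1) :
    ¬ altW true n <:+: ([false, false] ++ (wprime n x ++ [true, true])) := by
  intro h
  have hw'len : (wprime n x).length ≤ n - 1 := hx ▸ wprime_len n x
  rcases infix_append_split h with h1 | h1 | ⟨j, hj1, hj2, hj3, hj4⟩
  · have := h1.length_le; simp at this; omega
  · rcases infix_append_split h1 with h2 | h2 | ⟨j, hj1, hj2, hj3, hj4⟩
    · have := h2.length_le; simp at this; omega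
    · have := h2.length_le; simp at this; omega
    · rw [altW_length] at hj2
      rw [altW_drop] at hj4
      have hnj : n - j ≤ 2 := by simpa using hj4.length_le
      rcases Nat.mod_two_eq_zero_or_one j with hp | hp
      · -- j even, cc t j = t
        rw [cc_even hp] at hj4
        rcases (show n - j = 1 ∨ n - j = 2 by omega) with he | he
        · omega
        · rw [he, altW_two] at hj4
          exact absurd hj4 (by decide)
      · -- j odd, cc t j = f
        rw [cc_odd hp] at hj4
        rcases (show n - j = 1 ∨ n - j = 2 by omega) with he | he
        · rw [he] at hj4
          exact absurd hj4 (by decide)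
        · rw [he, altW_two] at hj4
          exact absurd hj4 (by decide)
  · rw [altW_length] at hj2
    rw [altW_take, min_eq_left hj2.le] at hj3
    exact altW_suf_ff hj1 hj3

theorem blkO_not_alt (hn : 4 ≤ n) (hpar : n % 2 = 1) (hx : x.length = n - 1) :
    ¬ altW true n <:+: ([false, false] ++ (wprime n x ++ [false, false, true])) := by
  intro h
  have hw'len : (wprime n x).length ≤ n - 1 := hx ▸ wprime_len n x
  have hn5 : 5 ≤ n := by omega
  rcases infix_append_split h with h1 | h1 | ⟨j, hj1, hj2, hj3, hj4⟩
  · have := h1.length_le; simp at this; omega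
  · rcases infix_append_split h1 with h2 | h2 | ⟨j, hj1, hj2, hj3, hj4⟩
    · have := h2.length_le; simp at this; omega
    · have := h2.length_le; simp at this; omega
    · rw [altW_length] at hj2
      rw [altW_drop] at hj4
      have hnj : n - j ≤ 3 := by simpa using hj4.length_le
      rcases Nat.mod_two_eq_zero_or_one j with hp | hp
      · rw [cc_even hp] at hj4
        rcases (show n - j = 1 ∨ n - j = 2 ∨ n - j = 3 by omega) with he | he | he
        · rw [he] at hj4
          exact absurd hj4 (by decide)
        · omega
        · rw [he, altW_three] at hj4
          exact absurd hj4 (by decide)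
      · rw [cc_odd hp] at hj4
        rcases (show n - j = 1 ∨ n - j = 2 ∨ n - j = 3 by omega) with he | he | he
        · omega
        · rw [he, altW_two] at hj4
          exact absurd hj4 (by decide)
        · omega
  · rw [altW_length] at hj2
    rw [altW_take, min_eq_left hj2.le] at hj3
    exact altW_suf_ff hj1 hj3

-- § pre-chunk lemmas (even)
theorem preE_not_rep {n : ℕ} (hn : 4 ≤ n) (c : Bool) :
    ¬ replicate n c <:+: (altW false (n-1) ++ [false, true]) := by
  intro h
  rcases infix_append_split h with h1 | h1 | ⟨j, hj1, hj2, hj3, hj4⟩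
  · have := h1.length_le; simp at this; omega
  · have := h1.length_le; simp at this; omega
  · rw [length_replicate] at hj2
    rw [drop_replicate] at hj4
    have hnj : n - j ≤ 2 := by simpa using hj4.length_le
    rw [take_replicate, min_eq_left hj2.le] at hj3
    have h1 : [c, c] <:+ altW false (n-1) := (cc_suf_rep (by omega)).trans hj3
    have h2 : altW (cc false (n-1-2)) 2 <:+ altW false (n-1) := altW_sufN (by omega)
    have := sufeq h1 h2 (by simp)
    rw [altW_two] at this
    rcases (cc false (n-1-2)) with _ | _ <;> rcases c with _ | _ <;> simp_all

theorem preE_not_alt {n : ℕ} (hn : 4 ≤ n) (hpar : n % 2 = 0) :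
    ¬ altW true n <:+: (altW false (n-1) ++ [false, true]) := by
  intro h
  rcases infix_append_split h with h1 | h1 | ⟨j, hj1, hj2, hj3, hj4⟩
  · have := h1.length_le; simp at this; omega
  · have := h1.length_le; simp at this; omega
  · rw [altW_length] at hj2
    rw [altW_take, min_eq_left hj2.le] at hj3
    rw [altW_drop] at hj4
    have hnj : n - j ≤ 2 := by simpa using hj4.length_le
    have hchar := altW_suf_char hj1 hj3
    have hjodd : (n - 1 - j) % 2 = 1 := by
      rcases Nat.mod_two_eq_zero_or_one (n-1-j) with hq | hq
      · rw [cc_even hq] at hchar; simp at hchar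
      · exact hq
    have hjeven : j % 2 = 0 := by
      have hjle : j ≤ n - 1 := by simpa using hj3.length_le
      omega
    rw [cc_even hjeven] at hj4
    rcases (show n - j = 1 ∨ n - j = 2 by omega) with he | he
    · rw [he] at hj4
      exact absurd hj4 (by decide)
    · rw [he, altW_two] at hj4
      exact absurd hj4 (by decide)

end altblocks

-- § chunk decomposition of wbar
def chunksE (n : ℕ) (L : List (List Bool)) : List (List Bool) :=
  (altW false (n-1) ++ [false, true]) ::
    ((L.map fun x => [false, false] ++ wprime n x ++ [true, true]) ++ [[false, false, true]])

def chunksO (n : ℕ) (L : List (List Bool)) : List (List Bool) :=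
  altW false (n-1) :: (L.map fun x => [false, false] ++ wprime n x ++ [false, false, true])

theorem wbar_evenE {n : ℕ} (hn : 4 ≤ n) (hpar : n % 2 = 0) (L : List (List Bool)) :
    wbar n L = (chunksE n L).flatten := by
  rw [wbar, if_pos hpar, wtilde_eq hn, chunksE]
  simp [append_assoc]

theorem wbar_oddO {n : ℕ} (hn : 4 ≤ n) (hpar : n % 2 = 1) (L : List (List Bool)) :
    wbar n L = (chunksO n L).flatten := by
  rw [wbar, if_neg (by omega), wtilde_eq hn, chunksO]
  simp

theorem altWf_ends_f {n : ℕ} (hn : 4 ≤ n) (hpar : n % 2 = 0) :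
    altW false (n-1) = altW false (n-2) ++ [false] := by
  rw [show n-1 = (n-2)+1 by omega, altW_snoc, cc_even (by omega)]

theorem altWf_ends_t {n : ℕ} (hn : 4 ≤ n) (hpar : n % 2 = 1) :
    altW false (n-1) = altW false (n-2) ++ [true] := by
  rw [show n-1 = (n-2)+1 by omega, altW_snoc, cc_odd (by omega)]
  simp

theorem preE_fft {n : ℕ} (hn : 4 ≤ n) (hpar : n % 2 = 0) :
    [false, false, true] <:+ altW false (n-1) ++ [false, true] := by
  rw [altWf_ends_f hn hpar, append_assoc]
  exact IsSuffix.trans (⟨[], rfl⟩ : [false,false,true] <:+ [false] ++ [false,true])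
    (suffix_append _ _)

theorem suffix_in_append {α} {s b : List α} (a : List α) (h : s <:+ b) : s <:+ a ++ b :=
  h.trans (suffix_append a b)

theorem len_not_infix {w l : List Bool} (h : l.length < w.length) : ¬ w <:+: l := by
  intro hi; have := hi.length_le; omega

-- chunk properties for even n
theorem chunkE_props {n : ℕ} (hn : 4 ≤ n) (hpar : n % 2 = 0) (L : List (List Bool))
    (hL : ∀ x ∈ L, (x : List Bool).length = n - 1) :
    ∀ c ∈ chunksE n L,
      (¬ replicate n true <:+: c) ∧ (¬ replicate n false <:+: c) ∧ (¬ altW true n <:+: c) ∧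
      ([true] <:+ c) ∧ ([true,true] <:+ c ∨ [false,false,true] <:+ c ∨ (n % 2 = 1 ∧ c = altW false (n-1))) := by
  intro c hc
  rcases mem_cons.mp hc with rfl | hc
  · exact ⟨preE_not_rep hn true, preE_not_rep hn false, preE_not_alt hn hpar,
      suffix_in_append _ (by decide), Or.inr (Or.inl (preE_fft hn hpar))⟩
  · rcases mem_append.mp hc with hc | hc
    · obtain ⟨x, hx, rfl⟩ := mem_map.mp hc
      have hxl := hL x hx
      exact ⟨blkE_not_rept hn hpar hxl, blkE_not_repf hn hpar hxl, blkE_not_alt hn hpar hxl,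
        suffix_in_append [false,false] (suffix_in_append (wprime n x)
          (by decide : [true] <:+ [true,true])),
        Or.inl (suffix_in_append [false,false] (suffix_append (wprime n x) [true,true]))⟩
    · rw [mem_singleton.mp hc]
      exact ⟨len_not_infix (by simp; omega), len_not_infix (by simp; omega),
        len_not_infix (by simp; omega), by decide, Or.inr (Or.inl suffix_rfl)⟩

theorem chunkO_props {n : ℕ} (hn : 4 ≤ n) (hpar : n % 2 = 1) (L : List (List Bool))
    (hL : ∀ x ∈ L, (x : List Bool).length = n - 1) :
    ∀ c ∈ chunksO n L,
      (¬ replicate n true <:+: c) ∧ (¬ replicate n false <:+: c) ∧ (¬ altW true n <:+: c) ∧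
      ([true] <:+ c) ∧ ([true,true] <:+ c ∨ [false,false,true] <:+ c ∨ (n % 2 = 1 ∧ c = altW false (n-1))) := by
  intro c hc
  rcases mem_cons.mp hc with rfl | hc
  · refine ⟨len_not_infix (by simp; omega), len_not_infix (by simp; omega),
      len_not_infix (by simp; omega), ?_, Or.inr (Or.inr ⟨hpar, rfl⟩)⟩
    rw [altWf_ends_t hn hpar]
    exact suffix_in_append _ suffix_rfl
  · obtain ⟨x, hx, rfl⟩ := mem_map.mp hc
    have hxl := hL x hx
    exact ⟨blkO_not_rept hn hxl, blkO_not_repf hn hpar hxl, blkO_not_alt hn hpar hxl,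
      suffix_in_append [false,false] (suffix_in_append (wprime n x)
        (by decide : [true] <:+ [false,false,true])),
      Or.inr (Or.inl (suffix_in_append [false,false]
        (suffix_append (wprime n x) [false,false,true])))⟩

theorem chunkE_tailFF {n : ℕ} (L : List (List Bool)) :
    ∀ c ∈ (chunksE n L).tail, startFF c := by
  intro c hc
  rw [chunksE] at hc
  simp only [tail_cons] at hc
  rcases mem_append.mp hc with hc | hc
  · obtain ⟨x, hx, rfl⟩ := mem_map.mp hc
    exact prefix_append _ _
  · rw [mem_singleton.mp hc]
    exact ⟨[true], rfl⟩

theorem chunkO_tailFF {n : ℕ} (L : List (List Bool)) :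
    ∀ c ∈ (chunksO n L).tail, startFF c := by
  intro c hc
  rw [chunksO] at hc
  simp only [tail_cons] at hc
  obtain ⟨x, hx, rfl⟩ := mem_map.mp hc
  exact prefix_append _ _

-- § the three main facts about wbar
theorem wbar_not_run {n : ℕ} (hn : 4 ≤ n) (L : List (List Bool))
    (hL : ∀ x ∈ L, (x : List Bool).length = n - 1) (c : Bool) :
    ¬ replicate n c <:+: wbar n L := by
  have hwne : (replicate n c) ≠ [] := by simp; omega
  have hnil : ¬ replicate n c <:+: ([] : List Bool) := len_not_infix (by simp; omega)
  rcases Nat.mod_two_eq_zero_or_one n with hpar | hpar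
  · rw [wbar_evenE hn hpar]
    have := build_chain (replicate n c) hwne (chunksE n L) []
      (fun ch hch => by
        obtain ⟨h1, h2, _, h4, _⟩ := chunkE_props hn hpar L hL ch hch
        cases c
        · exact ⟨h2, spanOK_repf hn h4⟩
        · exact ⟨h1, spanOK_rept hn ch⟩)
      (chunkE_tailFF L) (Or.inl rfl) hnil
    simpa using this
  · rw [wbar_oddO hn hpar]
    have := build_chain (replicate n c) hwne (chunksO n L) []
      (fun ch hch => by
        obtain ⟨h1, h2, _, h4, _⟩ := chunkO_props hn hpar L hL ch hch
        cases c
        · exact ⟨h2, spanOK_repf hn h4⟩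
        · exact ⟨h1, spanOK_rept hn ch⟩)
      (chunkO_tailFF L) (Or.inl rfl) hnil
    simpa using this

theorem wbar_not_alt {n : ℕ} (hn : 4 ≤ n) (L : List (List Bool))
    (hL : ∀ x ∈ L, (x : List Bool).length = n - 1) :
    ¬ altW true n <:+: wbar n L := by
  have hwne : (altW true n) ≠ [] := by
    intro h; have := congrArg List.length h; simp at this; omega
  have hnil : ¬ altW true n <:+: ([] : List Bool) := len_not_infix (by simp; omega)
  rcases Nat.mod_two_eq_zero_or_one n with hpar | hpar
  · rw [wbar_evenE hn hpar]
    have := build_chain (altW true n) hwne (chunksE n L) []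
      (fun ch hch => by
        obtain ⟨_, _, h3, _, h5⟩ := chunkE_props hn hpar L hL ch hch
        exact ⟨h3, spanOK_alt hn h5⟩)
      (chunkE_tailFF L) (Or.inl rfl) hnil
    simpa using this
  · rw [wbar_oddO hn hpar]
    have := build_chain (altW true n) hwne (chunksO n L) []
      (fun ch hch => by
        obtain ⟨_, _, h3, _, h5⟩ := chunkO_props hn hpar L hL ch hch
        exact ⟨h3, spanOK_alt hn h5⟩)
      (chunkO_tailFF L) (Or.inl rfl) hnil
    simpa using this

-- § boundary facts about wbar
theorem altWf_expand {m : ℕ} (hm : 2 ≤ m) :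
    altW false m = [false, true] ++ altW false (m-2) := by
  rw [show m = (m-2)+1+1 by omega, altW_succ, altW_succ]
  simp

theorem wbar_ft_pre {n : ℕ} (hn : 4 ≤ n) (L : List (List Bool)) :
    [false, true] <+: wbar n L := by
  have hw : [false, true] <+: wtilde n := by
    rw [wtilde_eq hn, altWf_expand (by omega)]
    exact prefix_append _ _
  rcases Nat.mod_two_eq_zero_or_one n with hpar | hpar
  · rw [wbar, if_pos hpar]
    exact ((hw.trans (prefix_append _ _)).trans (prefix_append _ _)).trans (prefix_append _ _)
  · rw [wbar, if_neg (by omega)]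
    exact hw.trans (prefix_append _ _)

theorem wbar_fft_suf {n : ℕ} (hn : 4 ≤ n) (L : List (List Bool)) (hLne : L ≠ []) :
    ∃ z, wbar n L = z ++ [false, false, true] := by
  rcases Nat.mod_two_eq_zero_or_one n with hpar | hpar
  · exact ⟨_, by rw [wbar, if_pos hpar]⟩
  · obtain ⟨L', x, rfl⟩ := L.eq_nil_or_concat.resolve_left hLne
    refine ⟨wtilde n ++ ((L'.map fun x => [false, false] ++ wprime n x ++ [false, false, true]).flatten
      ++ ([false, false] ++ wprime n x)), ?_⟩
    rw [wbar, if_neg (by omega)]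
    simp [append_assoc]

theorem wbar_wt {n : ℕ} (L : List (List Bool)) :
    ∃ r, wtilde n ++ r = wbar n L := by
  rcases Nat.mod_two_eq_zero_or_one n with hpar | hpar
  · refine ⟨[false, true] ++ (L.map fun x => [false, false] ++ wprime n x ++ [true, true]).flatten
      ++ [false, false, true], ?_⟩
    rw [wbar, if_pos hpar]
    simp [append_assoc]
  · exact ⟨_, by rw [wbar, if_neg (by omega)]⟩

-- § final combination lemmas
theorem final_run {n : ℕ} (hn : 4 ≤ n) {A : List Bool} (c m : Bool)
    (hft_pre : [false, true] <+: A) (hft_suf : [false, true] <:+ A)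
    (hA : ¬ replicate n c <:+: A) : ¬ replicate n c <:+: (A ++ [m] ++ A) := by
  intro h
  rw [append_assoc] at h
  have hcons : ([m] ++ A : List Bool) = m :: A := rfl
  rw [hcons] at h
  rcases infix_append_split h with h1 | h1 | ⟨j, hj1, hj2, hj3, hj4⟩
  · exact hA h1
  · rcases infix_cons_iff.mp h1 with h2 | h2
    · rw [rep_head (by omega : 0 < n), cons_prefix_cons] at h2
      have h4 : [c, c] <+: A := (cc_pre_rep (by omega)).trans h2.2
      have := preeq h4 hft_pre rfl
      cases c <;> simp_all
    · exact hA h2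
  · rw [length_replicate] at hj2
    rw [take_replicate, min_eq_left hj2.le] at hj3
    rw [drop_replicate] at hj4
    have h5 : replicate (n-j-1) c <+: A := by
      rw [rep_head (show 0 < n - j by omega)] at hj4
      exact (cons_prefix_cons.mp hj4).2
    rcases le_or_gt 2 (n-j-1) with h6 | h6
    · have h4 : [c, c] <+: A := (cc_pre_rep h6).trans h5
      have := preeq h4 hft_pre rfl
      cases c <;> simp_all
    · have h4 : [c, c] <:+ A := (cc_suf_rep (by omega)).trans hj3
      have := sufeq h4 hft_suf rfl
      cases c <;> simp_all

theorem final_alt_neg {n : ℕ} (hn : 4 ≤ n) {A : List Bool}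
    (hft_pre : [false, true] <+: A) (hfft : ∃ z, A = z ++ [false, false, true])
    (hA : ¬ altW true n <:+: A) : ¬ altW true n <:+: (A ++ [false] ++ A) := by
  intro h
  rcases infix_append_split h with h1 | h1 | ⟨j, hj1, hj2, hj3, hj4⟩
  · -- infix of A ++ [false]
    rcases infix_append_split h1 with h2 | h2 | ⟨j, hj1, hj2, hj3, hj4⟩
    · exact hA h2
    · have := h2.length_le; simp at this; omega
    · rw [altW_length] at hj2
      rw [altW_take, min_eq_left hj2.le] at hj3
      rw [altW_drop] at hj4
      have hnj : n - j ≤ 1 := by simpa using hj4.length_le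
      have hnj1 : n - j = 1 := by omega
      have hcc : cc true j = false := by
        rw [hnj1, show altW (cc true j) 1 = [cc true j] by simp [altW]] at hj4
        exact (cons_prefix_cons.mp hj4).1
      have hjodd : j % 2 = 1 := by
        rcases Nat.mod_two_eq_zero_or_one j with hq | hq
        · rw [cc_even hq] at hcc; simp at hcc
        · exact hq
      obtain ⟨z, hz⟩ := hfft
      have h7 : altW (cc true (j-3)) 3 <:+ A := (altW_sufN (show 3 ≤ j by omega)).trans hj3
      have h8 : [false, false, true] <:+ A := hz ▸ suffix_append z _
      have h9 := sufeq h7 h8 (by simp)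
      rw [cc_even (by omega : (j-3) % 2 = 0), altW_three] at h9
      simp at h9
  · exact hA h1
  · rw [altW_length] at hj2
    rw [altW_take, min_eq_left hj2.le] at hj3
    rw [altW_drop] at hj4
    rcases Nat.mod_two_eq_zero_or_one j with hq | hq
    · rw [cc_even hq, show n - j = (n-j-1)+1 by omega, altW_succ] at hj4
      exact head_clash hj4 hft_pre (by simp)
    · rw [show j = (j-1)+1 by omega, altW_snoc, cc_even (by omega : (j-1) % 2 = 0)] at hj3
      exact last_clash hj3 (suffix_rfl : A ++ [false] <:+ A ++ [false]) (by simp)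

theorem final_alt_pos {n : ℕ} {A : List Bool} (hwt : ∃ r, wtilde n ++ r = A) :
    (true :: wtilde n) <:+: (A ++ [true] ++ A) := by
  obtain ⟨r, hr⟩ := hwt
  refine ⟨A, r, ?_⟩
  rw [← hr]
  simp [append_assoc]

-- § factor containment
theorem x_in_blkE {n : ℕ} {x : List Bool} (hpar : n % 2 = 0) :
    x <:+: [false, false] ++ (wprime n x ++ [true, true]) := by
  have he : wprime n x = stripSuf [true, true] (stripPre [false, false] x) := by
    rw [wprime, if_pos hpar]
  set y := stripPre [false, false] x with hy
  have hxy : x <:+ [false, false] ++ y := by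
    rcases stripPre_cases [false, false] x with ⟨hs, heq⟩ | ⟨hs, heq⟩
    · rw [← hy] at heq; rw [← heq]
    · rw [← hy] at heq; rw [heq]; exact suffix_append _ _
  rcases stripSuf_cases [true, true] y with ⟨hs, heq⟩ | ⟨hs, heq⟩
  · have h2 : [false, false] ++ (wprime n x ++ [true, true]) = [false, false] ++ y := by
      rw [he]; congr 1; exact heq.symm
    rw [h2]; exact hxy.isInfix
  · have hp : [false, false] ++ y <+: [false, false] ++ (wprime n x ++ [true, true]) := by
      rw [he, heq]; exact ⟨[true, true], by simp⟩
    exact hxy.isInfix.trans hp.isInfix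

theorem x_in_blkO {n : ℕ} {x : List Bool} (hpar : n % 2 = 1) :
    x <:+: [false, false] ++ (wprime n x ++ [false, false, true]) := by
  have he : wprime n x = stripSuf [false, false] (stripPre [false, false] x) := by
    rw [wprime, if_neg (by omega)]
  set y := stripPre [false, false] x with hy
  have hxy : x <:+ [false, false] ++ y := by
    rcases stripPre_cases [false, false] x with ⟨hs, heq⟩ | ⟨hs, heq⟩
    · rw [← hy] at heq; rw [← heq]
    · rw [← hy] at heq; rw [heq]; exact suffix_append _ _
  rcases stripSuf_cases [false, false] y with ⟨hs, heq⟩ | ⟨hs, heq⟩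
  · have hyw : y = wprime n x ++ [false, false] := by rw [heq, ← he]
    have hp : [false, false] ++ y <+: [false, false] ++ (wprime n x ++ [false, false, true]) := by
      rw [hyw]; exact ⟨[true], by simp⟩
    exact hxy.isInfix.trans hp.isInfix
  · have hp : [false, false] ++ y <+: [false, false] ++ (wprime n x ++ [false, false, true]) := by
      rw [he, heq]; exact ⟨[false, false, true], by simp⟩
    exact hxy.isInfix.trans hp.isInfix

theorem wbar_contains {n : ℕ} (hn : 4 ≤ n) (L : List (List Bool)) {x : List Bool}
    (hx : x ∈ L) : x <:+: wbar n L := by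
  rcases Nat.mod_two_eq_zero_or_one n with hpar | hpar
  · have h1 : x <:+: ([false, false] ++ wprime n x ++ [true, true]) := x_in_blkE hpar
    have h2 : ([false, false] ++ wprime n x ++ [true, true]) <:+:
        (L.map fun x => [false, false] ++ wprime n x ++ [true, true]).flatten :=
      infix_of_mem_flatten (mem_map_of_mem hx)
    have h3 : (L.map fun x => [false, false] ++ wprime n x ++ [true, true]).flatten <:+:
        wbar n L := by
      rw [wbar, if_pos hpar]
      exact ⟨wtilde n ++ [false, true], [false, false, true], by simp [append_assoc]⟩
    exact (h1.trans h2).trans h3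
  · have h1 : x <:+: ([false, false] ++ wprime n x ++ [false, false, true]) := x_in_blkO hpar
    have h2 : ([false, false] ++ wprime n x ++ [false, false, true]) <:+:
        (L.map fun x => [false, false] ++ wprime n x ++ [false, false, true]).flatten :=
      infix_of_mem_flatten (mem_map_of_mem hx)
    have h3 : (L.map fun x => [false, false] ++ wprime n x ++ [false, false, true]).flatten <:+:
        wbar n L := by
      rw [wbar, if_neg (by omega)]
      exact ⟨wtilde n, [], by simp⟩
    exact (h1.trans h2).trans h3


/-- For `n ≥ 4`, the word `w̄` contains every word of length `n-1` as a factor,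
neither `u = w̄aw̄` nor `v = w̄bw̄` contains `aⁿ` or `bⁿ` as a factor, and
`w = aw̃` is a factor of `u` but not of `v`. -/
theorem stmt8 (n : ℕ) (hn : 4 ≤ n) (L : List (List Bool))
    (hL : ∀ x : List Bool, x ∈ L ↔ x.length = n - 1) :
    (∀ x : List Bool, x.length = n - 1 → x <:+: wbar n L) ∧
    ¬ List.replicate n true <:+: (wbar n L ++ [true] ++ wbar n L) ∧
    ¬ List.replicate n false <:+: (wbar n L ++ [true] ++ wbar n L) ∧
    ¬ List.replicate n true <:+: (wbar n L ++ [false] ++ wbar n L) ∧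
    ¬ List.replicate n false <:+: (wbar n L ++ [false] ++ wbar n L) ∧
    (true :: wtilde n) <:+: (wbar n L ++ [true] ++ wbar n L) ∧
    ¬ (true :: wtilde n) <:+: (wbar n L ++ [false] ++ wbar n L) := by
  have hL' : ∀ x ∈ L, (x : List Bool).length = n - 1 := fun x hx => (hL x).mp hx
  have hLne : L ≠ [] := ne_nil_of_mem ((hL (replicate (n-1) true)).mpr (by simp))
  have hft_pre : [false, true] <+: wbar n L := wbar_ft_pre hn L
  have hfft : ∃ z, wbar n L = z ++ [false, false, true] := wbar_fft_suf hn L hLne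
  have hft_suf : [false, true] <:+ wbar n L := by
    obtain ⟨z, hz⟩ := hfft
    rw [hz]
    exact IsSuffix.trans (by decide : [false,true] <:+ [false,false,true]) (suffix_append _ _)
  have haltid : true :: wtilde n = altW true n := by
    rw [wtilde_eq hn, show n = (n-1)+1 by omega, altW_succ]
    simp [show n - 1 + 1 - 1 = n - 1 by omega]
  refine ⟨fun x hx => wbar_contains hn L ((hL x).mpr hx),
    final_run hn true true hft_pre hft_suf (wbar_not_run hn L hL' true),
    final_run hn false true hft_pre hft_suf (wbar_not_run hn L hL' false),
    final_run hn true false hft_pre hft_suf (wbar_not_run hn L hL' true),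
    final_run hn false false hft_pre hft_suf (wbar_not_run hn L hL' false),
    final_alt_pos (wbar_wt L), ?_⟩
  rw [haltid]
  exact final_alt_neg hn hft_pre hfft (wbar_not_alt hn L hL')
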